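/- Let X be a symmetric Banach sequence space (with ‖eₖ‖ = 1) that is different from ℓ₁ as a set. If γ is a continuous symmetric linear functional on X, then γ(eₙ) = 0 for all n. Equivalently: if some (hence every) γ(eₙ) ≠ 0, then X = ℓ₁ with equivalent norms. -/
import Mathlib


open scoped Classical

/-- A Banach sequence space: a subspace of `ℕ → ℝ` with a complete monotone norm
such that the canonical unit vectors have norm one. -/
structure BanachSeqSpace where
  X : Submodule ℝ (ℕ → ℝ)
  N : (ℕ → ℝ) → ℝ
  N_nonneg : ∀ x ∈ X, 0 ≤ N x
  N_eq_zero : ∀ x ∈ X, N x = 0 → x = 0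
  N_add : ∀ x ∈ X, ∀ y ∈ X, N (x + y) ≤ N x + N y
  N_smul : ∀ (c : ℝ), ∀ x ∈ X, N (c • x) = |c| * N x
  complete : ∀ f : ℕ → ℕ → ℝ, (∀ k, f k ∈ X) →
    (∀ ε : ℝ, 0 < ε → ∃ K, ∀ m ≥ K, ∀ n ≥ K, N (f m - f n) < ε) →
    ∃ x ∈ X, ∀ ε : ℝ, 0 < ε → ∃ K, ∀ k ≥ K, N (f k - x) < ε
  mono_mem : ∀ (x : ℕ → ℝ), ∀ y ∈ X, (∀ n, |x n| ≤ |y n|) → x ∈ X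
  mono_norm : ∀ (x : ℕ → ℝ), ∀ y ∈ X, (∀ n, |x n| ≤ |y n|) → N x ≤ N y
  unit_mem : ∀ k : ℕ, (fun n => if n = k then (1 : ℝ) else 0) ∈ X
  unit_norm : ∀ k : ℕ, N (fun n => if n = k then (1 : ℝ) else 0) = 1

/-- A Banach sequence space is symmetric if it is stable under permutations of the
coordinates, with equal norm. -/
def IsSymmetric (S : BanachSeqSpace) : Prop :=
  ∀ x ∈ S.X, ∀ σ : Equiv.Perm ℕ, (x ∘ σ) ∈ S.X ∧ S.N (x ∘ σ) = S.N x

/-- The decreasing rearrangement of a (bounded) sequence, indexed from 0: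
`dstar x n` is the paper's `x*_(n+1) = inf { sup_{k ∉ J} |x k| : |J| ≤ n }`. -/
noncomputable def dstar (x : ℕ → ℝ) (n : ℕ) : ℝ :=
  sInf {a : ℝ | ∃ J : Finset ℕ, J.card ≤ n ∧ a = sSup {b : ℝ | ∃ k, k ∉ J ∧ b = |x k|}}

/-- The closing up of a sequence: its nonzero terms in order, padded with zeros. -/
noncomputable def closingUp (x : ℕ → ℝ) (n : ℕ) : ℝ :=
  if {k | x k ≠ 0}.Infinite ∨ n < {k | x k ≠ 0}.ncard
  then x (Nat.nth (fun k => x k ≠ 0) n) else 0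

noncomputable def unitVec (k : ℕ) : ℕ → ℝ := fun n => if n = k then 1 else 0

lemma N_zero (S : BanachSeqSpace) : S.N 0 = 0 := by
  have h := S.N_smul 0 0 S.X.zero_mem
  simpa using h

lemma unitVec_mem (S : BanachSeqSpace) (k : ℕ) : unitVec k ∈ S.X := S.unit_mem k

lemma abs_le_N (S : BanachSeqSpace) (z : ℕ → ℝ) (hz : z ∈ S.X) (n : ℕ) :
    |z n| ≤ S.N z := by
  have h1 : S.N (z n • unitVec n) ≤ S.N z := by
    refine S.mono_norm _ z hz ?_
    intro m
    by_cases hm : m = n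
    · subst hm; simp [unitVec]
    · simp [unitVec, hm]
  have h2 : S.N (z n • unitVec n) = |z n| := by
    rw [S.N_smul _ _ (unitVec_mem S n)]
    rw [show S.N (unitVec n) = 1 from S.unit_norm n, mul_one]
  linarith

lemma truncMem (S : BanachSeqSpace) (g : ℕ → ℝ) (F : Finset ℕ) :
    (∑ k ∈ F, g k • unitVec k) ∈ S.X :=
  Submodule.sum_mem _ fun k _ => S.X.smul_mem _ (unitVec_mem S k)

lemma trunc_apply (g : ℕ → ℝ) (F : Finset ℕ) (n : ℕ) :
    (∑ k ∈ F, g k • unitVec k) n = if n ∈ F then g n else 0 := by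
  rw [Finset.sum_apply]
  simp only [Pi.smul_apply, unitVec, smul_eq_mul, mul_ite, mul_one, mul_zero]
  exact Finset.sum_ite_eq F n g

lemma N_trunc_le (S : BanachSeqSpace) (g : ℕ → ℝ) (F : Finset ℕ) :
    S.N (∑ k ∈ F, g k • unitVec k) ≤ ∑ k ∈ F, |g k| := by
  classical
  induction F using Finset.induction_on with
  | empty => simp [N_zero S]
  | @insert a s hk ih =>
    rw [Finset.sum_insert hk, Finset.sum_insert hk]
    have h1 := S.N_add _ (S.X.smul_mem (g a) (unitVec_mem S a)) _ (truncMem S g s)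
    have h2 : S.N (g a • unitVec a) = |g a| := by
      rw [S.N_smul _ _ (unitVec_mem S a),
        show S.N (unitVec a) = 1 from S.unit_norm a, mul_one]
    calc S.N (g a • unitVec a + ∑ k ∈ s, g k • unitVec k)
        ≤ S.N (g a • unitVec a) + S.N (∑ k ∈ s, g k • unitVec k) := h1
      _ ≤ |g a| + ∑ k ∈ s, |g k| := by rw [h2]; linarith

lemma ell1_subset (S : BanachSeqSpace) (x : ℕ → ℝ) (hx : Summable fun n => |x n|) :
    x ∈ S.X := by
  classical
  set f : ℕ → ℕ → ℝ := fun k => ∑ i ∈ Finset.range k, x i • unitVec i with hf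
  have hfmem : ∀ k, f k ∈ S.X := fun k => truncMem S x _
  set s : ℕ → ℝ := fun k => ∑ i ∈ Finset.range k, |x i| with hs
  have hscau : CauchySeq s := hx.hasSum.tendsto_sum_nat.cauchySeq
  have key : ∀ a b : ℕ, b ≤ a → S.N (f a - f b) ≤ s a - s b := by
    intro a b hba
    have hsub : Finset.range b ⊆ Finset.range a := Finset.range_subset_range.2 hba
    have h1 : f a - f b = ∑ i ∈ Finset.range a \ Finset.range b, x i • unitVec i := by
      rw [hf]
      exact (Finset.sum_sdiff_eq_sub hsub).symm
    rw [h1]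
    calc S.N (∑ i ∈ Finset.range a \ Finset.range b, x i • unitVec i)
        ≤ ∑ i ∈ Finset.range a \ Finset.range b, |x i| := N_trunc_le S x _
      _ = s a - s b := Finset.sum_sdiff_eq_sub hsub
  have hcau : ∀ ε : ℝ, 0 < ε → ∃ K, ∀ m ≥ K, ∀ n ≥ K, S.N (f m - f n) < ε := by
    intro ε hε
    obtain ⟨K, hK⟩ := Metric.cauchySeq_iff.1 hscau ε hε
    refine ⟨K, fun m hm n hn => ?_⟩
    rcases le_total n m with h | h
    · calc S.N (f m - f n) ≤ s m - s n := key m n h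
        _ ≤ |s m - s n| := le_abs_self _
        _ < ε := by have := hK m hm n hn; rwa [Real.dist_eq] at this
    · have hneg : f m - f n = (-1 : ℝ) • (f n - f m) := by funext j; simp [Pi.sub_apply]
      calc S.N (f m - f n) = S.N ((-1 : ℝ) • (f n - f m)) := by rw [hneg]
        _ = |(-1 : ℝ)| * S.N (f n - f m) :=
            S.N_smul _ _ (S.X.sub_mem (hfmem n) (hfmem m))
        _ = S.N (f n - f m) := by norm_num
        _ ≤ s n - s m := key n m h
        _ ≤ |s n - s m| := le_abs_self _
        _ < ε := by have := hK n hn m hm; rwa [Real.dist_eq] at this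
  obtain ⟨y, hy, hconv⟩ := S.complete f hfmem hcau
  have hxy : x = y := by
    funext n
    have : ∀ ε : ℝ, 0 < ε → |x n - y n| < ε := by
      intro ε hε
      obtain ⟨K, hK⟩ := hconv ε hε
      set k := max K (n + 1) with hk
      have h1 : S.N (f k - y) < ε := hK k (le_max_left _ _)
      have h2 : f k n = x n := by
        show (∑ i ∈ Finset.range k, x i • unitVec i) n = x n
        rw [trunc_apply]
        have : n ∈ Finset.range k := Finset.mem_range.2 (lt_of_lt_of_le (Nat.lt_succ_self n) (le_max_right _ _))
        simp [this]
      have h3 : |(f k - y) n| ≤ S.N (f k - y) :=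
        abs_le_N S _ (S.X.sub_mem (hfmem k) hy) n
      have h4 : (f k - y) n = x n - y n := by simp [h2]
      rw [h4] at h3
      linarith
    by_contra hne
    have hp : 0 < |x n - y n| := abs_pos.2 (sub_ne_zero.2 hne)
    exact lt_irrefl _ (this _ hp)
  rw [hxy]; exact hy

/-- On a symmetric Banach sequence space different from `ℓ₁` as a set, every continuous
symmetric linear functional vanishes on the canonical unit vectors. -/
theorem symmetric_functional_vanishes_on_units (S : BanachSeqSpace)
    (hsym : IsSymmetric S)
    (hne : (S.X : Set (ℕ → ℝ)) ≠ {x | Summable fun n => |x n|})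
    (γ : (ℕ → ℝ) → ℝ)
    (hadd : ∀ x ∈ S.X, ∀ y ∈ S.X, γ (x + y) = γ x + γ y)
    (hsmul : ∀ (c : ℝ), ∀ x ∈ S.X, γ (c • x) = c * γ x)
    (hcont : ∃ C : ℝ, ∀ x ∈ S.X, |γ x| ≤ C * S.N x)
    (hγsym : ∀ x ∈ S.X, ∀ σ : Equiv.Perm ℕ, γ (x ∘ σ) = γ x) :
    ∀ k : ℕ, γ (fun n => if n = k then (1 : ℝ) else 0) = 0 := by
  have hγ0 : γ 0 = 0 := by
    have h := hsmul 0 0 S.X.zero_mem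
    simpa using h
  intro k
  show γ (unitVec k) = 0
  by_contra hc
  set c := γ (unitVec k) with hcdef
  have hall : ∀ m, γ (unitVec m) = c := by
    intro m
    have hσ := hγsym (unitVec k) (unitVec_mem S k) (Equiv.swap k m)
    have heq : (unitVec k) ∘ (Equiv.swap k m) = unitVec m := by
      funext n
      have h : Equiv.swap k m n = k ↔ n = m := by
        rw [Equiv.swap_apply_eq_iff, Equiv.swap_apply_left]
      simp only [Function.comp_apply, unitVec]
      simp [h]
    rw [heq] at hσ
    exact hσ
  -- ℓ₁ ⊆ X, so get x ∈ X not absolutely summable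
  have hsubset : {z : ℕ → ℝ | Summable fun n => |z n|} ⊆ (S.X : Set (ℕ → ℝ)) :=
    fun z hz => ell1_subset S z hz
  obtain ⟨x, hxX, hxns⟩ := Set.exists_of_ssubset (hsubset.ssubset_of_ne (Ne.symm hne))
  have hxns' : ¬ Summable fun n => |x n| := hxns
  obtain ⟨C, hC⟩ := hcont
  have hc0 : 0 < |c| := abs_pos.2 hc
  -- γ on truncations
  have hγsum : ∀ (F : Finset ℕ), γ (∑ i ∈ F, |x i| • unitVec i) = (∑ i ∈ F, |x i|) * c := by
    intro F
    classical
    induction F using Finset.induction_on with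
    | empty => simp [hγ0]
    | @insert a s ha ih =>
      rw [Finset.sum_insert ha, Finset.sum_insert ha,
        hadd _ (S.X.smul_mem _ (unitVec_mem S a)) _ (truncMem S _ s),
        hsmul _ _ (unitVec_mem S a), hall a, ih]
      ring
  have hbound : ∀ F : Finset ℕ, ∑ i ∈ F, |x i| ≤ C * S.N x / |c| := by
    intro F
    have hmem := truncMem S (fun i => |x i|) F
    have h1 : |γ (∑ i ∈ F, |x i| • unitVec i)| ≤ C * S.N (∑ i ∈ F, |x i| • unitVec i) :=
      hC _ hmem
    have h2 : |γ (∑ i ∈ F, |x i| • unitVec i)| = (∑ i ∈ F, |x i|) * |c| := by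
      rw [hγsum F, abs_mul, abs_of_nonneg (Finset.sum_nonneg fun i _ => abs_nonneg _)]
    have h3 : S.N (∑ i ∈ F, |x i| • unitVec i) ≤ S.N x := by
      refine S.mono_norm _ x hxX ?_
      intro n
      rw [trunc_apply]
      by_cases hn : n ∈ F
      · simp [hn]
      · simp [hn]
    have hCpos : 0 < C := by
      have := hC (unitVec k) (unitVec_mem S k)
      rw [show S.N (unitVec k) = 1 from S.unit_norm k, mul_one] at this
      exact lt_of_lt_of_le hc0 this
    have h4 : (∑ i ∈ F, |x i|) * |c| ≤ C * S.N x := by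
      calc (∑ i ∈ F, |x i|) * |c| = |γ (∑ i ∈ F, |x i| • unitVec i)| := h2.symm
        _ ≤ C * S.N (∑ i ∈ F, |x i| • unitVec i) := h1
        _ ≤ C * S.N x := by exact mul_le_mul_of_nonneg_left h3 hCpos.le
    rw [le_div_iff₀ hc0]
    exact h4
  exact hxns' (summable_of_sum_range_le (fun n => abs_nonneg _)
    (fun n => hbound (Finset.range n)))
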